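/- Suppose T*_0 ⊆ T*_1 (so on the disagreement region S = T*_1 \ T*_0, the classifier T*_0 predicts negatively), and let T be a well-defined classifier with T*_0 ⊆ T ⊆ T*_1. Assume TPR_0(T*_0) > TPR_1(T*_1), TNR_0(T*_0) < TNR_1(T*_1), and the positivity conditions ∫_{T \ T*_0} f_{0,1} dν > 0, ∫_{T*_1 \ T} f_{1,1} dν > 0, ∫_{T \ T*_0} f_{0,0} dν > 0, ∫_{T*_1 \ T} f_{1,0} dν > 0. Then F_U(T) = F_DU + F_MU(T), and F_MU(T) > 0. -/
import Mathlib


open MeasureTheory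

/-- True positive rate of group `a` under classifier `T`: `TPR_a(T) = ∫_T f_{a,1} dν`. -/
noncomputable def tprOf {Ω : Type*} [MeasurableSpace Ω] (ν : Measure Ω)
    (f : Bool → Bool → Ω → ℝ) (a : Bool) (T : Set Ω) : ℝ :=
  ∫ x in T, f a true x ∂ν

/-- True negative rate of group `a` under classifier `T`: `TNR_a(T) = ∫_{Tᶜ} f_{a,0} dν`. -/
noncomputable def tnrOf {Ω : Type*} [MeasurableSpace Ω] (ν : Measure Ω)
    (f : Bool → Bool → Ω → ℝ) (a : Bool) (T : Set Ω) : ℝ :=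
  ∫ x in Tᶜ, f a false x ∂ν

/-- Equalized-odds unfairness. -/
noncomputable def unfairness {Ω : Type*} [MeasurableSpace Ω] (ν : Measure Ω)
    (f : Bool → Bool → Ω → ℝ) (T : Set Ω) : ℝ :=
  (1/2) * |tprOf ν f true T - tprOf ν f false T|
    + (1/2) * |tnrOf ν f true T - tnrOf ν f false T|

/-- Data unfairness relative to reference (per-group optimal) classifiers `T*_0, T*_1`. -/
noncomputable def dataUnfairness {Ω : Type*} [MeasurableSpace Ω] (ν : Measure Ω)
    (f : Bool → Bool → Ω → ℝ) (T0 T1 : Set Ω) : ℝ :=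
  (1/2) * |tprOf ν f false T0 - tprOf ν f true T1|
    + (1/2) * |tnrOf ν f false T0 - tnrOf ν f true T1|

/-- Model unfairness of `T` relative to reference classifiers `T*_0, T*_1`. -/
noncomputable def modelUnfairness {Ω : Type*} [MeasurableSpace Ω] (ν : Measure Ω)
    (f : Bool → Bool → Ω → ℝ) (T0 T1 T : Set Ω) : ℝ :=
  (1/2) * |(tprOf ν f false T - tprOf ν f false T0)
      - (tprOf ν f true T - tprOf ν f true T1)|
    + (1/2) * |(tnrOf ν f false T - tnrOf ν f false T0)
      - (tnrOf ν f true T - tnrOf ν f true T1)|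

private lemma split_integral {Ω : Type*} [MeasurableSpace Ω] {ν : Measure Ω}
    {g : Ω → ℝ} (hg : Integrable g ν) {s t : Set Ω}
    (hs : MeasurableSet s) (ht : MeasurableSet t) (hst : s ⊆ t) :
    ∫ x in t, g x ∂ν = (∫ x in s, g x ∂ν) + ∫ x in t \ s, g x ∂ν := by
  rw [← MeasureTheory.setIntegral_union Set.disjoint_sdiff_right (ht.diff hs)
    hg.integrableOn hg.integrableOn, Set.union_diff_cancel hst]

/-- Equality case of the unfairness decomposition (Condition 2 of Theorem 3):
if `T*_0 ⊆ T*_1` (so on the disagreement region `S = T*_1 \ T*_0` the classifier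
`T*_0` predicts negatively), `T` is well-defined (`T*_0 ⊆ T ⊆ T*_1`),
`TPR₀(T*_0) > TPR₁(T*_1)`, `TNR₀(T*_0) < TNR₁(T*_1)`, and the stated integrals are
strictly positive, then `F_U(T) = F_DU + F_MU(T)` and `F_MU(T) > 0`. -/
theorem unfairness_decomposition_equality_cond2
    {Ω : Type*} [MeasurableSpace Ω] (ν : Measure Ω) [SigmaFinite ν]
    (f : Bool → Bool → Ω → ℝ)
    (hf_meas : ∀ a y, Measurable (f a y))
    (hf_nonneg : ∀ a y x, 0 ≤ f a y x)
    (hf_int : ∀ a y, Integrable (f a y) ν)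
    (hf_one : ∀ a y, ∫ x, f a y x ∂ν = 1)
    (T0 T1 : Set Ω) (hT0 : MeasurableSet T0) (hT1 : MeasurableSet T1)
    (hsub : T0 ⊆ T1)
    (T : Set Ω) (hT : MeasurableSet T) (hT0T : T0 ⊆ T) (hTT1 : T ⊆ T1)
    (htpr : tprOf ν f true T1 < tprOf ν f false T0)
    (htnr : tnrOf ν f false T0 < tnrOf ν f true T1)
    (hpos1 : 0 < ∫ x in T \ T0, f false true x ∂ν)
    (hpos2 : 0 < ∫ x in T1 \ T, f true true x ∂ν)
    (hpos3 : 0 < ∫ x in T \ T0, f false false x ∂ν)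
    (hpos4 : 0 < ∫ x in T1 \ T, f true false x ∂ν) :
    unfairness ν f T = dataUnfairness ν f T0 T1 + modelUnfairness ν f T0 T1 T ∧
      0 < modelUnfairness ν f T0 T1 T := by
  have hc1 : T0ᶜ \ Tᶜ = T \ T0 := by ext x; simp [Set.mem_diff]; tauto
  have hc2 : Tᶜ \ T1ᶜ = T1 \ T := by ext x; simp [Set.mem_diff]; tauto
  have ha : tprOf ν f false T
      = tprOf ν f false T0 + ∫ x in T \ T0, f false true x ∂ν :=
    split_integral (hf_int false true) hT0 hT hT0T
  have hb : tprOf ν f true T1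
      = tprOf ν f true T + ∫ x in T1 \ T, f true true x ∂ν :=
    split_integral (hf_int true true) hT hT1 hTT1
  have hcc : tnrOf ν f false T0
      = tnrOf ν f false T + ∫ x in T \ T0, f false false x ∂ν := by
    have := split_integral (hf_int false false) hT.compl hT0.compl
      (Set.compl_subset_compl.2 hT0T)
    rwa [hc1] at this
  have hd : tnrOf ν f true T
      = tnrOf ν f true T1 + ∫ x in T1 \ T, f true false x ∂ν := by
    have := split_integral (hf_int true false) hT1.compl hT.compl
      (Set.compl_subset_compl.2 hTT1)
    rwa [hc2] at this
  set A := ∫ x in T \ T0, f false true x ∂ν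
  set B := ∫ x in T1 \ T, f true true x ∂ν
  set C := ∫ x in T \ T0, f false false x ∂ν
  set D := ∫ x in T1 \ T, f true false x ∂ν
  unfold unfairness dataUnfairness modelUnfairness
  rw [ha, hb, hcc, hd]
  rw [abs_of_neg (by linarith), abs_of_pos (by linarith),
    abs_of_pos (by linarith), abs_of_neg (by linarith),
    abs_of_pos (by linarith), abs_of_neg (by linarith)]
  constructor <;> [ring; linarith]
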